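/- Let G ≤ Aut(T) be the closed subgroup generated by a_1 = (id,a_3), a_2 = (id,a_1)σ, a_3 = (a_2,id)σ. For any x ∈ G, the element (x,x) (acting diagonally on the two first-level subtrees) is in G. -/

import Mathlib

namespace TreeAut

/-- An automorphism of the infinite rooted binary tree, encoded by its portrait:
at each vertex (a finite word over `Bool`), whether the two subtrees are swapped. -/
def Port : Type := List Bool → Bool

/-- Auxiliary: the action of a tree automorphism on vertices (structural in the vertex). -/
def actAux : List Bool → Port → List Bool
  | [], _ => []
  | b :: l, p => (xor b (p [])) :: actAux l (fun s => p (b :: s))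

/-- The action of a tree automorphism on the vertices of the tree. -/
def act (p : Port) (l : List Bool) : List Bool := actAux l p

/-- Regard a function on vertices as a portrait. -/
def ofFun (f : List Bool → Bool) : Port := f

instance : One Port := ⟨fun _ => false⟩
instance : Mul Port := ⟨fun p q => ofFun fun s => xor (p s) (q (act p s))⟩

lemma one_apply (s : List Bool) : (1 : Port) s = false := rfl
lemma mul_apply (p q : Port) (s : List Bool) : (p * q) s = xor (p s) (q (act p s)) := rfl

/-- The left subtree portrait of `p` under branch `b`. -/
def sub (p : Port) (b : Bool) : Port := ofFun fun s => p (b :: s)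

lemma act_nil (p : Port) : act p [] = [] := rfl
lemma act_cons (p : Port) (b : Bool) (l : List Bool) :
    act p (b :: l) = (xor b (p [])) :: act (sub p b) l := rfl

lemma act_one : ∀ l, act (1 : Port) l = l
  | [] => rfl
  | b :: l => by
      show (xor b false) :: act (sub 1 b) l = b :: l
      have : sub 1 b = (1 : Port) := rfl
      rw [Bool.xor_false, this, act_one l]

lemma sub_mul (p q : Port) (b : Bool) : sub (p * q) b = sub p b * sub q (xor b (p [])) := rfl

lemma act_mul : ∀ (l : List Bool) (p q : Port), act (p * q) l = act q (act p l)
  | [], _, _ => rfl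
  | b :: l, p, q => by
      rw [act_cons, act_cons, act_cons, sub_mul, act_mul l]
      show (xor b (xor (p []) (q []))) :: _ = (xor (xor b (p [])) (q [])) :: _
      rw [Bool.xor_assoc]

/-- Auxiliary: the inverse action (structural in the vertex). -/
def invActAux : List Bool → Port → List Bool
  | [], _ => []
  | b :: l, p => (xor b (p [])) :: invActAux l (fun s => p ((xor b (p [])) :: s))

/-- The inverse of the action of a tree automorphism. -/
def invAct (p : Port) (l : List Bool) : List Bool := invActAux l p

instance : Inv Port := ⟨fun p => ofFun fun s => p (invAct p s)⟩

lemma inv_apply (p : Port) (s : List Bool) : (p⁻¹ : Port) s = p (invAct p s) := rfl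

lemma invAct_cons (p : Port) (b : Bool) (l : List Bool) :
    invAct p (b :: l) = (xor b (p [])) :: invAct (sub p (xor b (p []))) l := rfl

lemma invAct_act : ∀ (l : List Bool) (p : Port), invAct p (act p l) = l
  | [], _ => rfl
  | b :: l, p => by
      rw [act_cons, invAct_cons]
      have hb : xor (xor b (p [])) (p []) = b := by
        rw [Bool.xor_assoc, Bool.xor_self, Bool.xor_false]
      rw [hb]
      exact congrArg _ (invAct_act l _)

lemma sub_inv (p : Port) (b : Bool) : sub (p⁻¹ : Port) b = (sub p (xor b (p [])))⁻¹ := by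
  funext s
  show p (invAct p (b :: s)) = sub p (xor b (p [])) (invAct (sub p (xor b (p []))) s)
  rw [invAct_cons]
  rfl

lemma act_inv : ∀ (l : List Bool) (p : Port), act (p⁻¹ : Port) l = invAct p l
  | [], _ => rfl
  | b :: l, p => by
      rw [act_cons, sub_inv, act_inv l]
      have : (p⁻¹ : Port) [] = p [] := rfl
      rw [this, invAct_cons]

instance : Group Port :=
  Group.ofLeftAxioms
    (fun p q r => by
      funext s
      show xor (xor (p s) (q (act p s))) (r (act (p * q) s))
          = xor (p s) (xor (q (act p s)) (r (act q (act p s))))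
      rw [act_mul, Bool.xor_assoc])
    (fun p => by
      funext s
      show xor false (p (act 1 s)) = p s
      rw [Bool.false_xor, act_one])
    (fun p => by
      funext s
      show xor ((p⁻¹ : Port) s) (p (act (p⁻¹ : Port) s)) = false
      rw [act_inv, inv_apply, Bool.xor_self])

/-- The element `(u,v)τ` of `Aut(T) = (Aut(T) × Aut(T)) ⋊ S₂`: the automorphism acting
as `u` on the left subtree, as `v` on the right subtree, and by `τ` on the first level. -/
def mk (u v : Port) (τ : Bool) : Port := fun s =>
  match s with
  | [] => τ
  | b :: t => if b then v t else u t

/-- `σ`, the automorphism swapping the two first-level subtrees. -/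
def sigma : Port := mk 1 1 true

/-- Auxiliary structural recursion giving the portraits of the three generators. -/
def aT : List Bool → Bool × Bool × Bool
  | [] => (false, true, true)
  | b :: s => (if b then (aT s).2.2 else false,
               if b then (aT s).1 else false,
               if b then false else (aT s).2.1)

/-- The generator `a₁ = (id, a₃)`. -/
def a1 : Port := fun s => (aT s).1
/-- The generator `a₂ = (id, a₁)σ`. -/
def a2 : Port := fun s => (aT s).2.1
/-- The generator `a₃ = (a₂, id)σ`. -/
def a3 : Port := fun s => (aT s).2.2

lemma a1_eq : a1 = mk 1 a3 false := by
  funext s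
  cases s with
  | nil => rfl
  | cons b t => cases b <;> rfl

lemma a2_eq : a2 = mk 1 a1 true := by
  funext s
  cases s with
  | nil => rfl
  | cons b t => cases b <;> rfl

lemma a3_eq : a3 = mk a2 1 true := by
  funext s
  cases s with
  | nil => rfl
  | cons b t => cases b <;> rfl

lemma act_length : ∀ (l : List Bool) (p : Port), (act p l).length = l.length
  | [], _ => rfl
  | _ :: l, p => congrArg Nat.succ (act_length l _)

lemma invAct_length : ∀ (l : List Bool) (p : Port), (invAct p l).length = l.length
  | [], _ => rfl
  | _ :: l, p => congrArg Nat.succ (invAct_length l _)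

/-- The subgroup of `Aut(T)` of automorphisms acting trivially below level `n`;
it is (canonically isomorphic to) `W_n = Aut(T_n)`. -/
def W (n : ℕ) : Subgroup Port where
  carrier := {p | ∀ s : List Bool, n ≤ s.length → p s = false}
  one_mem' := fun _ _ => rfl
  mul_mem' := by
    intro p q hp hq s hs
    show xor (p s) (q (act p s)) = false
    rw [hp s hs, hq _ (by rw [act_length]; exact hs), Bool.xor_self]
  inv_mem' := by
    intro p hp s hs
    show p (invAct p s) = false
    exact hp _ (by rw [invAct_length]; exact hs)

/-- Restriction ("truncation") of a tree automorphism to the first `n` levels. -/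
def trunc (n : ℕ) (p : Port) : Port := fun s => if s.length < n then p s else false

lemma trunc_mem_W (n : ℕ) (p : Port) : trunc n p ∈ W n := by
  intro s hs
  simp only [trunc, if_neg (Nat.not_lt.mpr hs)]

instance : TopologicalSpace Port := inferInstanceAs (TopologicalSpace (List Bool → Bool))

section TopologyLemmas

variable {X : Type*} [TopologicalSpace X]

lemma continuous_bcond {f g h : X → Bool} (hf : Continuous f) (hg : Continuous g)
    (hh : Continuous h) : Continuous fun x => cond (f x) (g x) (h x) := by
  have heq : (fun x => cond (f x) (g x) (h x)) = fun x => if f x = true then g x else h x := by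
    funext x; cases hx : f x <;> simp
  rw [heq]
  refine Continuous.if ?_ hg hh
  have hclopen : IsClopen {x | f x = true} :=
    ⟨(isClosed_discrete {true}).preimage hf, (isOpen_discrete {true}).preimage hf⟩
  intro a ha
  rw [hclopen.frontier_eq] at ha
  exact absurd ha (Set.notMem_empty a)

lemma continuous_bnot {f : X → Bool} (hf : Continuous f) : Continuous fun x => !(f x) := by
  have heq : (fun x => !(f x)) = fun x => cond (f x) false true := by
    funext x; cases f x <;> rfl
  rw [heq]
  exact continuous_bcond hf continuous_const continuous_const

lemma continuous_bxor {f g : X → Bool} (hf : Continuous f) (hg : Continuous g) :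
    Continuous fun x => xor (f x) (g x) := by
  have heq : (fun x => xor (f x) (g x)) = fun x => cond (f x) (!(g x)) (g x) := by
    funext x; cases f x <;> cases g x <;> rfl
  rw [heq]
  exact continuous_bcond hf (continuous_bnot hg) hg

end TopologyLemmas

lemma continuous_sub_comp {X : Type*} [TopologicalSpace X] {f : X → Port} (b : Bool)
    (hf : Continuous f) : Continuous fun x => sub (f x) b := by
  refine continuous_pi fun s => ?_
  exact (continuous_apply (b :: s)).comp hf

lemma continuous_eval_act :
    ∀ s : List Bool, Continuous fun pq : Port × Port => pq.2 (act pq.1 s) := by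
  intro s
  induction s with
  | nil => exact (continuous_apply ([] : List Bool)).comp continuous_snd
  | cons b l ih =>
      have key : (fun pq : Port × Port => pq.2 (act pq.1 (b :: l)))
          = fun pq => cond (xor b (pq.1 []))
              ((fun pq' : Port × Port => pq'.2 (act pq'.1 l)) (sub pq.1 b, sub pq.2 true))
              ((fun pq' : Port × Port => pq'.2 (act pq'.1 l)) (sub pq.1 b, sub pq.2 false)) := by
        funext pq
        rw [act_cons]
        cases hx : xor b (pq.1 []) <;> rfl
      rw [key]
      have hc : Continuous fun pq : Port × Port => xor b (pq.1 []) :=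
        continuous_bxor continuous_const ((continuous_apply ([] : List Bool)).comp continuous_fst)
      refine continuous_bcond hc ?_ ?_ <;>
        exact ih.comp (((continuous_sub_comp b continuous_fst).prodMk
          (continuous_sub_comp _ continuous_snd)))

lemma continuous_eval_inv :
    ∀ s : List Bool, Continuous fun p : Port => p (invAct p s) := by
  intro s
  induction s with
  | nil => exact continuous_apply ([] : List Bool)
  | cons b l ih =>
      have key : (fun p : Port => p (invAct p (b :: l)))
          = fun p => cond (xor b (p []))
              ((fun q : Port => q (invAct q l)) (sub p true))
              ((fun q : Port => q (invAct q l)) (sub p false)) := by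
        funext p
        rw [invAct_cons]
        have : ∀ c : Bool, p (c :: invAct (sub p c) l) = (sub p c) (invAct (sub p c) l) :=
          fun c => rfl
        cases hx : xor b (p []) <;> simp only [hx] <;> exact this _
      rw [key]
      have hc : Continuous fun p : Port => xor b (p []) :=
        continuous_bxor continuous_const (continuous_apply ([] : List Bool))
      exact continuous_bcond hc (ih.comp (continuous_sub_comp true continuous_id))
        (ih.comp (continuous_sub_comp false continuous_id))

instance : IsTopologicalGroup Port where
  continuous_mul := by
    refine continuous_pi fun s => ?_
    exact continuous_bxor ((continuous_apply s).comp continuous_fst) (continuous_eval_act s)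
  continuous_inv := by
    refine continuous_pi fun s => ?_
    exact continuous_eval_inv s

lemma mk_apply_nil (u v : Port) (τ : Bool) : mk u v τ [] = τ := rfl

lemma mk_apply_cons (u v : Port) (τ b : Bool) (t : List Bool) :
    mk u v τ (b :: t) = if b then v t else u t := rfl

lemma sub_mk (u v : Port) (τ b : Bool) : sub (mk u v τ) b = cond b v u := by
  cases b <;> rfl

lemma mk_mul (u v u' v' : Port) (τ τ' : Bool) :
    mk u v τ * mk u' v' τ' = mk (u * cond τ v' u') (v * cond τ u' v') (xor τ τ') := by
  funext s
  cases s with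
  | nil => rfl
  | cons b t =>
      rw [mul_apply, act_cons, sub_mk, mk_apply_nil, mk_apply_cons, mk_apply_cons]
      cases b <;> cases τ <;> simp [mul_apply, mk_apply_cons]

lemma mk_one_one : mk 1 1 false = (1 : Port) := by
  funext s
  cases s with
  | nil => rfl
  | cons b t => cases b <;> rfl

lemma a2_sq : a2 * a2 = mk a1 a1 false := by
  rw [a2_eq, mk_mul]; simp

lemma a3_sq : a3 * a3 = mk a2 a2 false := by
  rw [a3_eq, mk_mul]; simp

lemma P_eq : a1 * a2 * a3 = mk 1 (a3 * a1 * a2) false := by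
  rw [a1_eq, a2_eq, a3_eq, mk_mul, mk_mul]
  simp [← a1_eq, ← a2_eq, ← a3_eq, mul_assoc]

lemma Q_eq : a3 * a1 * a2 = mk (a2 * a3 * a1) 1 false := by
  rw [a1_eq, a2_eq, a3_eq, mk_mul, mk_mul]
  simp [← a1_eq, ← a2_eq, ← a3_eq, mul_assoc]

lemma R_eq : a2 * a3 * a1 = mk 1 (a1 * a2 * a3) false := by
  rw [a1_eq, a2_eq, a3_eq, mk_mul, mk_mul]
  simp [← a1_eq, ← a2_eq, ← a3_eq, mul_assoc]

lemma triple_false : ∀ s : List Bool,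
    (a1 * a2 * a3) s = false ∧ (a3 * a1 * a2) s = false ∧ (a2 * a3 * a1) s = false := by
  intro s
  induction s with
  | nil => exact ⟨by rw [P_eq]; rfl, by rw [Q_eq]; rfl, by rw [R_eq]; rfl⟩
  | cons b t ih =>
      refine ⟨?_, ?_, ?_⟩
      · rw [P_eq, mk_apply_cons]
        cases b
        · exact one_apply t
        · simpa using ih.2.1
      · rw [Q_eq, mk_apply_cons]
        cases b
        · simpa using ih.2.2
        · exact one_apply t
      · rw [R_eq, mk_apply_cons]
        cases b
        · exact one_apply t
        · simpa using ih.1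

lemma a123 : a1 * a2 * a3 = 1 := by
  funext s
  rw [(triple_false s).1]; rfl

lemma a3_eq_inv : a3 = a2⁻¹ * a1⁻¹ := by
  have h : (a1 * a2) * a3 = 1 := a123
  rw [← mul_inv_rev]
  exact eq_inv_of_mul_eq_one_right h

/-- The diagonal embedding `x ↦ (x, x)` as a monoid homomorphism. -/
def diagHom : Port →* Port where
  toFun x := mk x x false
  map_one' := mk_one_one
  map_mul' x y := by rw [mk_mul]; simp

lemma continuous_diagHom : Continuous (diagHom : Port → Port) := by
  refine continuous_pi fun s => ?_
  cases s with
  | nil =>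
      have : (fun x : Port => diagHom x []) = fun _ => false := rfl
      rw [this]; exact continuous_const
  | cons b t =>
      cases b
      · exact continuous_apply t
      · exact continuous_apply t

/-- Let `G` be the closed subgroup of `Aut(T)` generated by
`a₁, a₂, a₃`. For any `x ∈ G`, the element `(x,x)` is in `G`. -/
theorem diagonal_mem_closure (x : Port)
    (hx : x ∈ (Subgroup.closure {a1, a2, a3} : Subgroup Port).topologicalClosure) :
    mk x x false ∈ (Subgroup.closure {a1, a2, a3} : Subgroup Port).topologicalClosure := by
  set G := (Subgroup.closure {a1, a2, a3} : Subgroup Port).topologicalClosure with hG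
  set H := G.comap diagHom with hH
  have hle : (Subgroup.closure {a1, a2, a3} : Subgroup Port) ≤ G :=
    Subgroup.le_topologicalClosure _
  have ha1 : a1 ∈ G := hle (Subgroup.subset_closure (by simp))
  have ha2 : a2 ∈ G := hle (Subgroup.subset_closure (by simp))
  have ha3 : a3 ∈ G := hle (Subgroup.subset_closure (by simp))
  have hclosed : IsClosed (H : Set Port) := by
    have : (H : Set Port) = diagHom ⁻¹' (G : Set Port) := rfl
    rw [this]
    exact (Subgroup.isClosed_topologicalClosure _).preimage continuous_diagHom
  have hd1 : diagHom a1 ∈ G := by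
    have : diagHom a1 = a2 * a2 := by rw [a2_sq]; rfl
    rw [this]; exact mul_mem ha2 ha2
  have hd2 : diagHom a2 ∈ G := by
    have : diagHom a2 = a3 * a3 := by rw [a3_sq]; rfl
    rw [this]; exact mul_mem ha3 ha3
  have hd3 : diagHom a3 ∈ G := by
    rw [a3_eq_inv, map_mul, map_inv, map_inv]
    exact mul_mem (inv_mem hd2) (inv_mem hd1)
  have hsub : ({a1, a2, a3} : Set Port) ⊆ H := by
    intro y hy
    rcases hy with rfl | rfl | rfl
    · exact hd1
    · exact hd2
    · exact hd3
  have hCH : (Subgroup.closure {a1, a2, a3} : Subgroup Port) ≤ H :=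
    (Subgroup.closure_le H).mpr hsub
  have hGH : G ≤ H := Subgroup.topologicalClosure_minimal _ hCH hclosed
  exact hGH hx

end TreeAut
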